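/- arXiv:1912.06342 — 6 statements merged into one kernel-verified Lean document; each statement's English description precedes it below -/
import Mathlib

section
/- Let ε > 0. Define F⁺(γ) = (1/n²)·Σ_{k,l=1}^n [a_kl(γ) − ε·log(1 + a_kl(γ)/ε)]·B_kl·1{B_kl>0} and F⁻(γ) = −(1/n²)·Σ_{k,l=1}^n [a_kl(γ) − ε·log(1 + a_kl(γ)/ε)]·B_kl·1{B_kl<0}, for γ ∈ ℝ^{p×d}. Then: (i) F⁺ and F⁻ are convex functions on ℝ^{p×d}; (ii) V²_{n,ε}(γ) = F⁺(γ) − F⁻(γ) for all γ; and (iii) V²_{n,ε} is continuous and differentiable on all of ℝ^{p×d}. -/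
open Matrix

attribute [local instance] Matrix.normedAddCommGroup Matrix.normedSpace

/-- Euclidean norm of a vector in `ℝ^m`. -/
noncomputable def enorm {m : ℕ} (v : Fin m → ℝ) : ℝ := Real.sqrt (∑ i, v i ^ 2)

/-- `a_kl(γ) = ‖γᵀ(Z_k − Z_l)‖₂`. -/
noncomputable def akl (n p d : ℕ) (Z : Fin n → Fin p → ℝ)
    (γ : Matrix (Fin p) (Fin d) ℝ) (k l : Fin n) : ℝ :=
  enorm (γᵀ *ᵥ (Z k - Z l))

/-- The perturbed objective `V²_{n,ε}`. -/
noncomputable def Vne (n p d : ℕ) (Z : Fin n → Fin p → ℝ) (B : Fin n → Fin n → ℝ)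
    (ε : ℝ) (γ : Matrix (Fin p) (Fin d) ℝ) : ℝ :=
  (1 / (n : ℝ) ^ 2) * ∑ k, ∑ l,
    (akl n p d Z γ k l - ε * Real.log (1 + akl n p d Z γ k l / ε)) * B k l

/-- `F⁺(γ)`, the positive part of the DC decomposition. -/
noncomputable def Fplus (n p d : ℕ) (Z : Fin n → Fin p → ℝ) (B : Fin n → Fin n → ℝ)
    (ε : ℝ) (γ : Matrix (Fin p) (Fin d) ℝ) : ℝ :=
  (1 / (n : ℝ) ^ 2) * ∑ k, ∑ l,
    (akl n p d Z γ k l - ε * Real.log (1 + akl n p d Z γ k l / ε)) *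
      (if 0 < B k l then B k l else 0)

/-- `F⁻(γ)`, the negative part of the DC decomposition. -/
noncomputable def Fminus (n p d : ℕ) (Z : Fin n → Fin p → ℝ) (B : Fin n → Fin n → ℝ)
    (ε : ℝ) (γ : Matrix (Fin p) (Fin d) ℝ) : ℝ :=
  -((1 / (n : ℝ) ^ 2) * ∑ k, ∑ l,
    (akl n p d Z γ k l - ε * Real.log (1 + akl n p d Z γ k l / ε)) *
      (if B k l < 0 then B k l else 0))

/-! ### Auxiliary material -/

/-- The scalar function `h(t) = t - ε log(1 + t/ε)`. -/
noncomputable def hh (ε t : ℝ) : ℝ := t - ε * Real.log (1 + t / ε)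

lemma hh_hasDerivAt {ε : ℝ} (hε : 0 < ε) {t : ℝ} (ht : 0 ≤ t) :
    HasDerivAt (hh ε) (t / (t + ε)) t := by
  have h1 : (0:ℝ) < 1 + t / ε := by positivity
  have hlog : HasDerivAt (fun s => Real.log (1 + s / ε)) ((1 + t / ε)⁻¹ * (1 / ε)) t := by
    have hin : HasDerivAt (fun s : ℝ => 1 + s / ε) (1 / ε) t := by
      simpa using ((hasDerivAt_id t).div_const ε).const_add 1
    exact (Real.hasDerivAt_log h1.ne').comp t hin
  have : HasDerivAt (hh ε) (1 - ε * ((1 + t / ε)⁻¹ * (1 / ε))) t :=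
    (hasDerivAt_id t).sub (hlog.const_mul ε)
  convert this using 1
  have hε' := hε.ne'
  have h2 : t + ε ≠ 0 := by positivity
  field_simp
  ring

lemma hh_deriv {ε : ℝ} (hε : 0 < ε) {t : ℝ} (ht : 0 ≤ t) :
    deriv (hh ε) t = t / (t + ε) := (hh_hasDerivAt hε ht).deriv

lemma hh_contOn {ε : ℝ} (hε : 0 < ε) : ContinuousOn (hh ε) (Set.Ici 0) :=
  fun t ht => ((hh_hasDerivAt hε ht).differentiableAt).continuousAt.continuousWithinAt

lemma hh_mono {ε : ℝ} (hε : 0 < ε) : MonotoneOn (hh ε) (Set.Ici 0) := by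
  apply monotoneOn_of_deriv_nonneg (convex_Ici 0) (hh_contOn hε)
  · rw [interior_Ici]
    exact fun t ht => ((hh_hasDerivAt hε (le_of_lt ht)).differentiableAt).differentiableWithinAt
  · rw [interior_Ici]
    intro t ht
    rw [Set.mem_Ioi] at ht
    rw [hh_deriv hε ht.le]
    exact div_nonneg ht.le (by linarith)

lemma hh_convexOn {ε : ℝ} (hε : 0 < ε) : ConvexOn ℝ (Set.Ici 0) (hh ε) := by
  apply MonotoneOn.convexOn_of_deriv (convex_Ici 0) (hh_contOn hε)
  · rw [interior_Ici]
    exact fun t ht => ((hh_hasDerivAt hε (le_of_lt ht)).differentiableAt).differentiableWithinAt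
  · rw [interior_Ici]
    intro x hx y hy hxy
    rw [Set.mem_Ioi] at hx hy
    rw [hh_deriv hε hx.le, hh_deriv hε hy.le]
    rw [div_le_div_iff₀ (by linarith) (by linarith)]
    nlinarith

lemma convexOn_sum' {ι E : Type*} [AddCommGroup E] [Module ℝ E] (t : Finset ι)
    (f : ι → E → ℝ) (h : ∀ i ∈ t, ConvexOn ℝ Set.univ (f i)) :
    ConvexOn ℝ Set.univ (fun x => ∑ i ∈ t, f i x) := by
  induction t using Finset.cons_induction with
  | empty => simpa using convexOn_const 0 convex_univ
  | cons i s hi ih =>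
    simp only [Finset.sum_cons]
    exact (h i (Finset.mem_cons_self i s)).add (ih fun j hj => h j (Finset.mem_cons_of_mem hj))

lemma enorm_eq {m : ℕ} (v : Fin m → ℝ) :
    _root_.enorm v = ‖(WithLp.equiv 2 (Fin m → ℝ)).symm v‖ := by
  rw [_root_.enorm, EuclideanSpace.norm_eq]
  congr 1
  refine Finset.sum_congr rfl fun i _ => ?_
  simp [Real.norm_eq_abs, sq_abs]

/-- The linear map `γ ↦ γᵀ v` with values in Euclidean space. -/
noncomputable def Tmap (p d : ℕ) (v : Fin p → ℝ) :
    Matrix (Fin p) (Fin d) ℝ →ₗ[ℝ] EuclideanSpace ℝ (Fin d) where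
  toFun γ := (WithLp.equiv 2 (Fin d → ℝ)).symm (γᵀ *ᵥ v)
  map_add' x y := by
    simp only [transpose_add, add_mulVec]
    rfl
  map_smul' c x := by
    simp only [transpose_smul, smul_mulVec, RingHom.id_apply]
    rfl

lemma akl_eq (n p d : ℕ) (Z : Fin n → Fin p → ℝ) (γ : Matrix (Fin p) (Fin d) ℝ)
    (k l : Fin n) : akl n p d Z γ k l = ‖Tmap p d (Z k - Z l) γ‖ := by
  rw [akl, enorm_eq]
  rfl

lemma diff_core {d : ℕ} {ε : ℝ} (hε : 0 < ε) :
    Differentiable ℝ (fun x : EuclideanSpace ℝ (Fin d) => hh ε ‖x‖) := by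
  intro x
  by_cases hx : x = 0
  · subst hx
    have hlo : (fun t : ℝ => hh ε t) =o[nhds 0] (fun t => t) := by
      have h0 := hh_hasDerivAt hε (le_refl (0:ℝ))
      rw [hasDerivAt_iff_isLittleO] at h0
      simpa [hh, Real.log_one] using h0
    have h2 : (fun y : EuclideanSpace ℝ (Fin d) => hh ε ‖y‖) =o[nhds 0]
        (fun y : EuclideanSpace ℝ (Fin d) => ‖y‖) :=
      hlo.comp_tendsto tendsto_norm_zero
    have h3 : (fun y : EuclideanSpace ℝ (Fin d) => ‖y‖) =O[nhds 0]
        (fun y : EuclideanSpace ℝ (Fin d) => y) :=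
      Asymptotics.isBigO_norm_left.mpr (Asymptotics.isBigO_refl _ _)
    have : HasFDerivAt (fun y : EuclideanSpace ℝ (Fin d) => hh ε ‖y‖)
        (0 : EuclideanSpace ℝ (Fin d) →L[ℝ] ℝ) 0 := by
      rw [hasFDerivAt_iff_isLittleO_nhds_zero]
      simpa [hh, Real.log_one] using h2.trans_isBigO h3
    exact this.differentiableAt
  · have hnorm : DifferentiableAt ℝ (fun y : EuclideanSpace ℝ (Fin d) => ‖y‖) x :=
      differentiableAt_id.norm ℝ hx
    have houter : DifferentiableAt ℝ (hh ε) ‖x‖ :=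
      (hh_hasDerivAt hε (norm_nonneg x)).differentiableAt
    exact houter.comp x hnorm

lemma term_diff {p d : ℕ} {ε : ℝ} (hε : 0 < ε) (v : Fin p → ℝ) :
    Differentiable ℝ (fun γ : Matrix (Fin p) (Fin d) ℝ => hh ε ‖Tmap p d v γ‖) := by
  have hL : Differentiable ℝ fun γ : Matrix (Fin p) (Fin d) ℝ => Tmap p d v γ :=
    (LinearMap.toContinuousLinearMap (Tmap p d v)).differentiable
  exact (diff_core hε).comp hL

lemma term_convex {p d : ℕ} {ε : ℝ} (hε : 0 < ε) (v : Fin p → ℝ) :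
    ConvexOn ℝ Set.univ (fun γ : Matrix (Fin p) (Fin d) ℝ => hh ε ‖Tmap p d v γ‖) := by
  refine ⟨convex_univ, ?_⟩
  intro x _ y _ a b ha hb hab
  simp only [smul_eq_mul]
  have key : ‖Tmap p d v (a • x + b • y)‖ ≤ a * ‖Tmap p d v x‖ + b * ‖Tmap p d v y‖ := by
    rw [map_add, LinearMap.map_smul, LinearMap.map_smul]
    refine (norm_add_le _ _).trans ?_
    rw [norm_smul, norm_smul, Real.norm_eq_abs, Real.norm_eq_abs,
      abs_of_nonneg ha, abs_of_nonneg hb]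
  have h1 : hh ε ‖Tmap p d v (a • x + b • y)‖ ≤
      hh ε (a * ‖Tmap p d v x‖ + b * ‖Tmap p d v y‖) :=
    hh_mono hε (Set.mem_Ici.2 (norm_nonneg _))
      (Set.mem_Ici.2 (by positivity)) key
  refine h1.trans ?_
  simpa [smul_eq_mul] using
    (hh_convexOn hε).2 (Set.mem_Ici.2 (norm_nonneg (Tmap p d v x)))
      (Set.mem_Ici.2 (norm_nonneg (Tmap p d v y))) ha hb hab

lemma term_convex_mul {p d : ℕ} {ε : ℝ} (hε : 0 < ε) (v : Fin p → ℝ) {w : ℝ}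
    (hw : 0 ≤ w) :
    ConvexOn ℝ Set.univ (fun γ : Matrix (Fin p) (Fin d) ℝ => hh ε ‖Tmap p d v γ‖ * w) := by
  have base := term_convex (p := p) (d := d) hε v
  have h2 : ConvexOn ℝ Set.univ
      (fun γ : Matrix (Fin p) (Fin d) ℝ => w • hh ε ‖Tmap p d v γ‖) := base.smul hw
  have heq : (fun γ : Matrix (Fin p) (Fin d) ℝ => hh ε ‖Tmap p d v γ‖ * w)
      = fun γ => w • hh ε ‖Tmap p d v γ‖ := by
    funext γ
    simp [smul_eq_mul, mul_comm]
  rw [heq]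
  exact h2

/-- (i) F⁺ and F⁻ are convex on ℝ^{p×d}; (ii) V²_{n,ε} = F⁺ − F⁻;
(iii) V²_{n,ε} is continuous and differentiable on all of ℝ^{p×d}. -/
theorem stmt_6 (n p d : ℕ) (Z : Fin n → Fin p → ℝ) (B : Fin n → Fin n → ℝ)
    (ε : ℝ) (hε : 0 < ε) :
    ConvexOn ℝ Set.univ (Fplus n p d Z B ε) ∧
    ConvexOn ℝ Set.univ (Fminus n p d Z B ε) ∧
    (∀ γ : Matrix (Fin p) (Fin d) ℝ,
      Vne n p d Z B ε γ = Fplus n p d Z B ε γ - Fminus n p d Z B ε γ) ∧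
    Continuous (Vne n p d Z B ε) ∧
    Differentiable ℝ (Vne n p d Z B ε) := by
  have hc : (0:ℝ) ≤ 1 / (n : ℝ) ^ 2 := by positivity
  -- rewrite the summand using `hh` and `Tmap`
  have hterm : ∀ (γ : Matrix (Fin p) (Fin d) ℝ) (k l : Fin n),
      akl n p d Z γ k l - ε * Real.log (1 + akl n p d Z γ k l / ε)
        = hh ε ‖Tmap p d (Z k - Z l) γ‖ := by
    intro γ k l
    rw [← akl_eq]
    rfl
  -- (i) convexity of Fplus
  have hFp : ConvexOn ℝ Set.univ (Fplus n p d Z B ε) := by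
    have heq : Fplus n p d Z B ε = fun γ => (1 / (n : ℝ) ^ 2) •
        ∑ k, ∑ l, hh ε ‖Tmap p d (Z k - Z l) γ‖ * (if 0 < B k l then B k l else 0) := by
      funext γ
      simp only [Fplus, smul_eq_mul]
      congr 1
      exact Finset.sum_congr rfl fun k _ => Finset.sum_congr rfl fun l _ => by
        rw [hterm]
    rw [heq]
    refine ConvexOn.smul hc ?_
    refine convexOn_sum' _ _ fun k _ => convexOn_sum' _ _ fun l _ => ?_
    refine term_convex_mul hε _ ?_
    split <;> [exact le_of_lt ‹_›; exact le_refl 0]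
  -- (i) convexity of Fminus
  have hFm : ConvexOn ℝ Set.univ (Fminus n p d Z B ε) := by
    have heq : Fminus n p d Z B ε = fun γ => (1 / (n : ℝ) ^ 2) •
        ∑ k, ∑ l, hh ε ‖Tmap p d (Z k - Z l) γ‖ * (if B k l < 0 then -B k l else 0) := by
      funext γ
      simp only [Fminus, smul_eq_mul]
      rw [neg_mul_eq_mul_neg, ← Finset.sum_neg_distrib]
      congr 1
      refine Finset.sum_congr rfl fun k _ => ?_
      rw [← Finset.sum_neg_distrib]
      refine Finset.sum_congr rfl fun l _ => ?_
      rw [hterm]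
      split_ifs with hb <;> ring
    rw [heq]
    refine ConvexOn.smul hc ?_
    refine convexOn_sum' _ _ fun k _ => convexOn_sum' _ _ fun l _ => ?_
    refine term_convex_mul hε _ ?_
    split <;> [linarith [‹B k l < 0›]; exact le_refl 0]
  -- (ii) decomposition
  have hdecomp : ∀ γ : Matrix (Fin p) (Fin d) ℝ,
      Vne n p d Z B ε γ = Fplus n p d Z B ε γ - Fminus n p d Z B ε γ := by
    intro γ
    simp only [Vne, Fplus, Fminus, sub_neg_eq_add, ← mul_add, ← Finset.sum_add_distrib]
    congr 1
    refine Finset.sum_congr rfl fun k _ => Finset.sum_congr rfl fun l _ => ?_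
    congr 1
    split_ifs with h1 h2 <;> first | linarith | ring
  -- (iii) differentiability
  have hdiff : Differentiable ℝ (Vne n p d Z B ε) := by
    have heq : Vne n p d Z B ε = fun γ => (1 / (n : ℝ) ^ 2) *
        ∑ k, ∑ l, hh ε ‖Tmap p d (Z k - Z l) γ‖ * B k l := by
      funext γ
      simp only [Vne]
      congr 1
      exact Finset.sum_congr rfl fun k _ => Finset.sum_congr rfl fun l _ => by
        rw [hterm]
    rw [heq]
    refine Differentiable.const_mul ?_ _
    refine Differentiable.fun_sum fun k _ => Differentiable.fun_sum fun l _ => ?_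
    exact (term_diff hε (Z k - Z l)).mul_const _
  exact ⟨hFp, hFm, hdecomp, hdiff.continuous, hdiff⟩
end

section
/- As ε decreases to 0, the perturbed objective V²_{n,ε} converges to V_n² uniformly on the Stiefel manifold St(d,p); that is, for every δ > 0 there exists ε₀ > 0 such that for all ε ∈ (0, ε₀) and all γ ∈ ℝ^{p×d} with γᵀγ = I_d, one has |V_n²(γ) − V²_{n,ε}(γ)| ≤ δ. -/
open Matrix

/-- The objective `V_n²`. -/
noncomputable def Vn (n p d : ℕ) (Z : Fin n → Fin p → ℝ) (B : Fin n → Fin n → ℝ)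
    (γ : Matrix (Fin p) (Fin d) ℝ) : ℝ :=
  (1 / (n : ℝ) ^ 2) * ∑ k, ∑ l, akl n p d Z γ k l * B k l

/-- `log(1+x) ≤ 2√x` for `x ≥ 0`. -/
lemma my_log_le_two_sqrt (x : ℝ) (hx : 0 ≤ x) : Real.log (1 + x) ≤ 2 * Real.sqrt x := by
  have h1 : (1 : ℝ) + x ≤ (1 + Real.sqrt x) ^ 2 := by
    have := Real.sq_sqrt hx
    nlinarith [Real.sqrt_nonneg x]
  have h2 : Real.log (1 + x) ≤ Real.log ((1 + Real.sqrt x) ^ 2) :=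
    Real.log_le_log (by linarith) h1
  rw [Real.log_pow] at h2
  have h3 : Real.log (1 + Real.sqrt x) ≤ Real.sqrt x := by
    have := Real.log_le_sub_one_of_pos (x := 1 + Real.sqrt x) (by positivity)
    linarith
  push_cast at h2
  linarith

/-- `ε·log(1+a/ε) ≤ 2·√ε·√a`. -/
lemma my_term_bound (ε a : ℝ) (hε : 0 < ε) (ha : 0 ≤ a) :
    ε * Real.log (1 + a / ε) ≤ 2 * Real.sqrt ε * Real.sqrt a := by
  have h := my_log_le_two_sqrt (a / ε) (by positivity)
  have h2 : ε * Real.log (1 + a / ε) ≤ ε * (2 * Real.sqrt (a / ε)) :=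
    mul_le_mul_of_nonneg_left h hε.le
  have hsε : Real.sqrt ε * Real.sqrt ε = ε := Real.mul_self_sqrt hε.le
  have hsεpos : 0 < Real.sqrt ε := Real.sqrt_pos.2 hε
  have h3 : ε * (2 * Real.sqrt (a / ε)) = 2 * Real.sqrt ε * Real.sqrt a := by
    rw [Real.sqrt_div ha ε]
    field_simp
    nlinarith [Real.sqrt_nonneg a]
  linarith [h2, h3.le, h3.ge]

/-- On the Stiefel manifold, `a_kl(γ) ≤ √d ⬝ ‖Z_k − Z_l‖`. -/
lemma my_akl_le (n p d : ℕ) (Z : Fin n → Fin p → ℝ) (γ : Matrix (Fin p) (Fin d) ℝ)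
    (hγ : γᵀ * γ = 1) (k l : Fin n) :
    akl n p d Z γ k l ≤ Real.sqrt d * _root_.enorm (Z k - Z l) := by
  set w : Fin p → ℝ := Z k - Z l with hw
  have hcol : ∀ i : Fin d, ∑ j, γ j i ^ 2 = 1 := by
    intro i
    have := congrFun (congrFun hγ i) i
    simp [Matrix.mul_apply, Matrix.one_apply, Matrix.transpose_apply, sq] at this ⊢
    convert this using 1
  have hterm : ∀ i : Fin d, ((γᵀ *ᵥ w) i) ^ 2 ≤ ∑ j, w j ^ 2 := by
    intro i
    have hcs := Finset.sum_mul_sq_le_sq_mul_sq Finset.univ (fun j => γ j i) w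
    have : (γᵀ *ᵥ w) i = ∑ j, γ j i * w j := by
      simp [Matrix.mulVec, Matrix.transpose_apply, dotProduct]
    rw [this]
    calc (∑ j, γ j i * w j) ^ 2 ≤ (∑ j, γ j i ^ 2) * ∑ j, w j ^ 2 := hcs
      _ = ∑ j, w j ^ 2 := by rw [hcol i, one_mul]
  have : ∑ i, ((γᵀ *ᵥ w) i) ^ 2 ≤ (d : ℝ) * ∑ j, w j ^ 2 := by
    calc ∑ i, ((γᵀ *ᵥ w) i) ^ 2 ≤ ∑ _i : Fin d, ∑ j, w j ^ 2 :=
          Finset.sum_le_sum fun i _ => hterm i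
      _ = (d : ℝ) * ∑ j, w j ^ 2 := by simp [Finset.sum_const, nsmul_eq_mul]
  unfold akl _root_.enorm
  calc Real.sqrt (∑ i, ((γᵀ *ᵥ w) i) ^ 2) ≤ Real.sqrt ((d : ℝ) * ∑ j, w j ^ 2) :=
        Real.sqrt_le_sqrt this
    _ = Real.sqrt d * Real.sqrt (∑ j, w j ^ 2) := Real.sqrt_mul (by positivity) _

/-- As ε ↓ 0, `V²_{n,ε}` converges to `V_n²` uniformly on the
Stiefel manifold `St(d,p) = {γ : γᵀγ = I_d}`. -/
theorem stmt_7 (n p d : ℕ) (Z : Fin n → Fin p → ℝ) (B : Fin n → Fin n → ℝ) :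
    ∀ δ : ℝ, 0 < δ → ∃ ε₀ : ℝ, 0 < ε₀ ∧
      ∀ ε : ℝ, 0 < ε → ε < ε₀ →
        ∀ γ : Matrix (Fin p) (Fin d) ℝ, γᵀ * γ = 1 →
          |Vn n p d Z B γ - Vne n p d Z B ε γ| ≤ δ := by
  intro δ hδ
  rcases Nat.eq_zero_or_pos n with hn | hn
  · subst hn
    exact ⟨1, one_pos, fun ε hε hε' γ hγ => by
      simp [Vn, Vne, Finset.sum_of_isEmpty]; linarith⟩
  · set K := ∑ k, ∑ l, 2 * Real.sqrt (Real.sqrt d * _root_.enorm (Z k - Z l)) * |B k l| with hK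
    have hK0 : 0 ≤ K := by
      apply Finset.sum_nonneg; intro k _
      apply Finset.sum_nonneg; intro l _
      positivity
    have hK1 : (0 : ℝ) < K + 1 := by linarith
    refine ⟨(δ / (K + 1)) ^ 2, pow_pos (div_pos hδ hK1) 2, fun ε hε hεlt γ hγ => ?_⟩
    have hsqrtε : Real.sqrt ε < δ / (K + 1) := by
      have h := Real.sqrt_lt_sqrt hε.le hεlt
      rwa [Real.sqrt_sq (div_pos hδ hK1).le] at h
    have hdiff : Vn n p d Z B γ - Vne n p d Z B ε γ
        = (1 / (n : ℝ) ^ 2) * ∑ k, ∑ l,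
            ε * Real.log (1 + akl n p d Z γ k l / ε) * B k l := by
      unfold Vn Vne
      rw [← mul_sub, ← Finset.sum_sub_distrib]
      congr 1
      refine Finset.sum_congr rfl fun k _ => ?_
      rw [← Finset.sum_sub_distrib]
      exact Finset.sum_congr rfl fun l _ => by ring
    rw [hdiff, abs_mul]
    have h1n : |1 / (n : ℝ) ^ 2| ≤ 1 := by
      rw [abs_of_nonneg (by positivity)]
      have hn1 : (1 : ℝ) ≤ (n : ℝ) := by exact_mod_cast hn
      rw [div_le_one (by positivity)]
      nlinarith
    have hterm : ∀ k l : Fin n,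
        |ε * Real.log (1 + akl n p d Z γ k l / ε) * B k l|
          ≤ Real.sqrt ε * (2 * Real.sqrt (Real.sqrt d * _root_.enorm (Z k - Z l)) * |B k l|) := by
      intro k l
      have ha0 : 0 ≤ akl n p d Z γ k l := Real.sqrt_nonneg _
      have hlog0 : 0 ≤ Real.log (1 + akl n p d Z γ k l / ε) :=
        Real.log_nonneg (by nlinarith [div_nonneg ha0 hε.le])
      rw [abs_mul, abs_of_nonneg (mul_nonneg hε.le hlog0)]
      have hb := my_term_bound ε (akl n p d Z γ k l) hε ha0
      have hble : Real.sqrt (akl n p d Z γ k l)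
          ≤ Real.sqrt (Real.sqrt d * _root_.enorm (Z k - Z l)) :=
        Real.sqrt_le_sqrt (my_akl_le n p d Z γ hγ k l)
      have h2 : ε * Real.log (1 + akl n p d Z γ k l / ε)
          ≤ 2 * Real.sqrt ε * Real.sqrt (Real.sqrt d * _root_.enorm (Z k - Z l)) := by
        calc ε * Real.log (1 + akl n p d Z γ k l / ε)
            ≤ 2 * Real.sqrt ε * Real.sqrt (akl n p d Z γ k l) := hb
          _ ≤ 2 * Real.sqrt ε * Real.sqrt (Real.sqrt d * _root_.enorm (Z k - Z l)) := by
              have := Real.sqrt_nonneg ε; nlinarith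
      calc ε * Real.log (1 + akl n p d Z γ k l / ε) * |B k l|
          ≤ 2 * Real.sqrt ε * Real.sqrt (Real.sqrt d * _root_.enorm (Z k - Z l)) * |B k l| :=
            mul_le_mul_of_nonneg_right h2 (abs_nonneg _)
        _ = Real.sqrt ε * (2 * Real.sqrt (Real.sqrt d * _root_.enorm (Z k - Z l)) * |B k l|) := by
            ring
    have hsum : |∑ k, ∑ l, ε * Real.log (1 + akl n p d Z γ k l / ε) * B k l|
        ≤ Real.sqrt ε * K := by
      calc |∑ k, ∑ l, ε * Real.log (1 + akl n p d Z γ k l / ε) * B k l|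
          ≤ ∑ k, |∑ l, ε * Real.log (1 + akl n p d Z γ k l / ε) * B k l| :=
            Finset.abs_sum_le_sum_abs _ _
        _ ≤ ∑ k, ∑ l, |ε * Real.log (1 + akl n p d Z γ k l / ε) * B k l| :=
            Finset.sum_le_sum fun k _ => Finset.abs_sum_le_sum_abs _ _
        _ ≤ ∑ k, ∑ l, Real.sqrt ε *
              (2 * Real.sqrt (Real.sqrt d * _root_.enorm (Z k - Z l)) * |B k l|) :=
            Finset.sum_le_sum fun k _ => Finset.sum_le_sum fun l _ => hterm k l
        _ = Real.sqrt ε * K := by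
            rw [hK, Finset.mul_sum]
            exact Finset.sum_congr rfl fun k _ => (Finset.mul_sum _ _ _).symm
    calc |1 / (n : ℝ) ^ 2| * |∑ k, ∑ l,
            ε * Real.log (1 + akl n p d Z γ k l / ε) * B k l|
        ≤ 1 * (Real.sqrt ε * K) :=
          mul_le_mul h1n hsum (abs_nonneg _) zero_le_one
      _ = Real.sqrt ε * K := one_mul _
      _ ≤ δ := by
          have hεn : 0 ≤ Real.sqrt ε := Real.sqrt_nonneg ε
          have h1 : Real.sqrt ε * K ≤ (δ / (K + 1)) * K :=
            mul_le_mul_of_nonneg_right hsqrtε.le hK0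
          have h2 : (δ / (K + 1)) * K ≤ δ := by
            rw [div_mul_eq_mul_div, div_le_iff₀ (by linarith)]
            nlinarith
          linarith
end

section
/- Let ε > 0 and c ∈ ℝ^p be fixed. For all p×d real matrices γ and γ', the supporting-hyperplane inequality holds: ‖γᵀc‖₂ − ε·log(1 + ‖γᵀc‖₂/ε) ≥ ‖γ'ᵀc‖₂ − ε·log(1 + ‖γ'ᵀc‖₂/ε) + tr((γ − γ')ᵀ · c cᵀ γ' / (‖γ'ᵀc‖₂ + ε)). -/
open Matrix

/-- Euclidean norm of a vector in `ℝ^m`. -/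
noncomputable def enorm₂ {m : ℕ} (v : Fin m → ℝ) : ℝ := Real.sqrt (∑ i, v i ^ 2)

lemma enorm₂_nonneg {m : ℕ} (v : Fin m → ℝ) : 0 ≤ enorm₂ v := Real.sqrt_nonneg _

lemma enorm₂_sq {m : ℕ} (v : Fin m → ℝ) : enorm₂ v ^ 2 = ∑ i, v i ^ 2 :=
  Real.sq_sqrt (Finset.sum_nonneg fun _ _ => sq_nonneg _)

lemma key_ineq (ε a b t : ℝ) (hε : 0 < ε) (ha : 0 ≤ a) (hb : 0 ≤ b)
    (ht : t ≤ a * b) :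
    a - ε * Real.log (1 + a / ε) ≥ b - ε * Real.log (1 + b / ε)
      + (b + ε)⁻¹ * (t - b ^ 2) := by
  have hbε : 0 < b + ε := by linarith
  have h1 : (b + ε)⁻¹ * (t - b ^ 2) ≤ (b + ε)⁻¹ * (b * (a - b)) := by
    apply mul_le_mul_of_nonneg_left _ (by positivity)
    nlinarith
  have h2 : Real.log ((ε + a) / (ε + b)) ≤ (ε + a) / (ε + b) - 1 :=
    Real.log_le_sub_one_of_pos (by positivity)
  have hlog : Real.log (1 + a / ε) - Real.log (1 + b / ε)
      = Real.log ((ε + a) / (ε + b)) := by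
    rw [Real.log_div (by positivity) (by positivity)]
    have e1 : 1 + a / ε = (ε + a) / ε := by field_simp
    have e2 : 1 + b / ε = (ε + b) / ε := by field_simp
    rw [e1, e2, Real.log_div (by positivity) hε.ne',
      Real.log_div (by positivity) hε.ne']
    ring
  have h3 : (ε + a) / (ε + b) - 1 = (a - b) / (b + ε) := by
    rw [div_sub_one (by positivity : (0:ℝ) < ε + b).ne']
    ring_nf
  rw [h3] at h2
  have h4 : ε * Real.log (1 + a / ε) - ε * Real.log (1 + b / ε)
      ≤ ε * ((a - b) / (b + ε)) := by
    rw [← mul_sub, hlog]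
    exact mul_le_mul_of_nonneg_left h2 hε.le
  have h5 : (b + ε)⁻¹ * (b * (a - b)) + ε * ((a - b) / (b + ε)) = a - b := by
    field_simp
  linarith

/-- For ε > 0 and fixed c ∈ ℝ^p, the supporting-hyperplane
inequality for the convex function `γ ↦ ‖γᵀc‖₂ − ε·log(1 + ‖γᵀc‖₂/ε)`:
for all p×d matrices γ and γ',
`f(γ) ≥ f(γ') + tr((γ − γ')ᵀ · c cᵀ γ' / (‖γ'ᵀc‖₂ + ε))`. -/
theorem stmt_9 (p d : ℕ) (ε : ℝ) (hε : 0 < ε) (c : Fin p → ℝ)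
    (γ γ' : Matrix (Fin p) (Fin d) ℝ) :
    enorm₂ (γᵀ *ᵥ c) - ε * Real.log (1 + enorm₂ (γᵀ *ᵥ c) / ε)
      ≥ enorm₂ (γ'ᵀ *ᵥ c) - ε * Real.log (1 + enorm₂ (γ'ᵀ *ᵥ c) / ε)
        + Matrix.trace ((γ - γ')ᵀ *
            ((enorm₂ (γ'ᵀ *ᵥ c) + ε)⁻¹ • (Matrix.vecMulVec c c * γ'))) := by
  set u := γᵀ *ᵥ c with hu
  set v := γ'ᵀ *ᵥ c with hv
  set k := (enorm₂ v + ε)⁻¹ with hk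
  have htrace : Matrix.trace ((γ - γ')ᵀ *
      (k • (Matrix.vecMulVec c c * γ')))
      = k * ((∑ j, u j * v j) - ∑ j, v j ^ 2) := by
    simp only [Matrix.trace, Matrix.diag, Matrix.mul_apply, Matrix.smul_apply,
      Matrix.transpose_apply, Matrix.vecMulVec_apply, Matrix.sub_apply,
      hu, hv, Matrix.mulVec, dotProduct, smul_eq_mul]
    have hx : ∀ x : Fin d, ∑ i, (γ i x - γ' i x) * (k * ∑ j, c i * c j * γ' j x)
        = k * ((∑ i, γ i x * c i) * (∑ i, γ' i x * c i)
          - (∑ i, γ' i x * c i) ^ 2) := by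
      intro x
      have h1 : ∀ i, ∑ j, c i * c j * γ' j x = c i * ∑ j, γ' j x * c j := by
        intro i
        rw [Finset.mul_sum]
        exact Finset.sum_congr rfl fun j _ => by ring
      simp_rw [h1]
      have h2 : ∀ i, (γ i x - γ' i x) * (k * (c i * ∑ j, γ' j x * c j))
          = (k * ∑ j, γ' j x * c j) * (γ i x * c i - γ' i x * c i) := fun i => by
        ring
      simp_rw [h2, ← Finset.mul_sum, Finset.sum_sub_distrib]
      ring
    simp_rw [hx, ← Finset.mul_sum, Finset.sum_sub_distrib]
  rw [htrace]
  have hcs : (∑ j, u j * v j) ≤ enorm₂ u * enorm₂ v :=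
    Real.sum_mul_le_sqrt_mul_sqrt _ _ _
  have := key_ineq ε (enorm₂ u) (enorm₂ v) (∑ j, u j * v j) hε
    (enorm₂_nonneg u) (enorm₂_nonneg v) hcs
  rw [enorm₂_sq] at this
  exact this
end

section
/- Let ε > 0. For all real numbers x ≥ 0 and x' ≥ 0, the following tangent-line inequality holds: x^{1/2} − ε·log(1 + x^{1/2}/ε) ≤ (x')^{1/2} − ε·log(1 + (x')^{1/2}/ε) + (x − x')/(2·((x')^{1/2} + ε)). -/
open Real

/-- Derivative of the auxiliary function. -/
lemma aux_hasDerivAt (ε t s : ℝ) (hε : 0 < ε) (ht : 0 ≤ t) (hs : -ε < s) :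
    HasDerivAt (fun u : ℝ => ε * Real.log (ε + u) - u + u ^ 2 / (2 * (ε + t)))
      (ε / (ε + s) - 1 + s / (ε + t)) s := by
  have h0 : ε + s ≠ 0 := by linarith
  have h1 : HasDerivAt (fun u : ℝ => ε + u) 1 s := (hasDerivAt_id s).const_add ε
  have h2 : HasDerivAt (fun u : ℝ => Real.log (ε + u)) ((ε + s)⁻¹ * 1) s :=
    (Real.hasDerivAt_log h0).comp s h1
  have h3 : HasDerivAt (fun u : ℝ => u ^ 2) (2 * s) s := by
    simpa using (hasDerivAt_pow 2 s)
  have h4 : HasDerivAt (fun u : ℝ => u ^ 2 / (2 * (ε + t))) (2 * s / (2 * (ε + t))) s :=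
    h3.div_const _
  have : HasDerivAt (fun u : ℝ => ε * Real.log (ε + u) - u + u ^ 2 / (2 * (ε + t)))
      (ε * ((ε + s)⁻¹ * 1) - 1 + 2 * s / (2 * (ε + t))) s :=
    ((h2.const_mul ε).sub (hasDerivAt_id s)).add h4
  convert this using 1
  have h5 : ε + t ≠ 0 := by linarith
  field_simp

/-- Key inequality. -/
lemma aux_key (ε t : ℝ) (hε : 0 < ε) (ht : 0 ≤ t) :
    ∀ s, 0 ≤ s →
      (s - t) - (s ^ 2 - t ^ 2) / (2 * (ε + t)) ≤ ε * (Real.log (ε + s) - Real.log (ε + t)) := by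
  set f : ℝ → ℝ := fun u => ε * Real.log (ε + u) - u + u ^ 2 / (2 * (ε + t)) with hf
  set f' : ℝ → ℝ := fun u => ε / (ε + u) - 1 + u / (ε + t) with hf'
  have hcont : ContinuousOn f (Set.Ici (0 : ℝ)) := by
    intro u hu
    exact ((aux_hasDerivAt ε t u hε ht (by simp at hu; linarith)).continuousAt).continuousWithinAt
  have hft : ∀ s : ℝ, 0 ≤ s → f t ≤ f s := by
    intro s hs
    rcases le_total t s with hts | hst
    · have hmono : MonotoneOn f (Set.Icc t s) := by
        refine monotoneOn_of_hasDerivWithinAt_nonneg (convex_Icc t s)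
          (hcont.mono (Set.Icc_subset_Ici_self.trans (Set.Ici_subset_Ici.2 ht))) (f' := f') ?_ ?_
        · intro u hu
          rw [interior_Icc] at hu
          exact ((aux_hasDerivAt ε t u hε ht (by linarith [hu.1])).hasDerivWithinAt)
        · intro u hu
          rw [interior_Icc] at hu
          have hu0 : 0 < u := lt_of_le_of_lt ht hu.1
          have h1 : 0 < ε + u := by linarith
          have h2 : 0 < ε + t := by linarith
          have : f' u = u * (u - t) / ((ε + u) * (ε + t)) := by
            simp only [hf']
            field_simp
            ring
          rw [this]
          have : 0 ≤ u * (u - t) := by nlinarith [hu.1]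
          positivity
      exact hmono (Set.left_mem_Icc.2 hts) (Set.mem_Icc.2 ⟨hts, le_refl s⟩) hts
    · have hanti : AntitoneOn f (Set.Icc s t) := by
        refine antitoneOn_of_hasDerivWithinAt_nonpos (convex_Icc s t)
          (hcont.mono (Set.Icc_subset_Ici_self.trans (Set.Ici_subset_Ici.2 hs))) (f' := f') ?_ ?_
        · intro u hu
          rw [interior_Icc] at hu
          exact ((aux_hasDerivAt ε t u hε ht (by linarith [hu.1])).hasDerivWithinAt)
        · intro u hu
          rw [interior_Icc] at hu
          have hu0 : 0 < u := lt_of_le_of_lt hs hu.1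
          have h1 : 0 < ε + u := by linarith
          have h2 : 0 < ε + t := by linarith
          have heq : f' u = u * (u - t) / ((ε + u) * (ε + t)) := by
            simp only [hf']
            field_simp
            ring
          rw [heq]
          have hnum : u * (u - t) ≤ 0 := by nlinarith [hu.2]
          have hden : 0 < (ε + u) * (ε + t) := by positivity
          exact div_nonpos_of_nonpos_of_nonneg hnum hden.le
      exact hanti (Set.left_mem_Icc.2 hst) (Set.right_mem_Icc.2 hst) hst
  intro s hs
  have := hft s hs
  simp only [hf] at this
  have h2 : 0 < ε + t := by linarith
  have h3 : (s ^ 2 - t ^ 2) / (2 * (ε + t)) = s ^ 2 / (2 * (ε + t)) - t ^ 2 / (2 * (ε + t)) :=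
    sub_div _ _ _
  have h4 := sub_nonneg.2 this
  rw [h3]
  linarith [h4]

/-- For ε > 0 and all x, x' ≥ 0, the tangent-line inequality
`√x − ε·log(1 + √x/ε) ≤ √x' − ε·log(1 + √x'/ε) + (x − x')/(2(√x' + ε))`. -/
theorem stmt_10 (ε x x' : ℝ) (hε : 0 < ε) (hx : 0 ≤ x) (hx' : 0 ≤ x') :
    Real.sqrt x - ε * Real.log (1 + Real.sqrt x / ε)
      ≤ Real.sqrt x' - ε * Real.log (1 + Real.sqrt x' / ε)
        + (x - x') / (2 * (Real.sqrt x' + ε)) := by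
  set s := Real.sqrt x with hsdef
  set t := Real.sqrt x' with htdef
  have hs : 0 ≤ s := Real.sqrt_nonneg x
  have ht : 0 ≤ t := Real.sqrt_nonneg x'
  have hs2 : s ^ 2 = x := Real.sq_sqrt hx
  have ht2 : t ^ 2 = x' := Real.sq_sqrt hx'
  have hεne : ε ≠ 0 := ne_of_gt hε
  have hlog1 : Real.log (1 + s / ε) = Real.log (ε + s) - Real.log ε := by
    rw [show (1 : ℝ) + s / ε = (ε + s) / ε by field_simp]
    exact Real.log_div (by linarith) hεne
  have hlog2 : Real.log (1 + t / ε) = Real.log (ε + t) - Real.log ε := by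
    rw [show (1 : ℝ) + t / ε = (ε + t) / ε by field_simp]
    exact Real.log_div (by linarith) hεne
  have key := aux_key ε t hε ht s hs
  rw [hlog1, hlog2]
  have hteq : t + ε = ε + t := by ring
  rw [hteq]
  have hxx : (x - x') / (2 * (ε + t)) = (s ^ 2 - t ^ 2) / (2 * (ε + t)) := by
    rw [hs2, ht2]
  rw [hxx]
  nlinarith [key]
end

section
/- Let St = {γ ∈ ℝ^{p×d} : γᵀγ = I_d}. Let (ε_m)_{m≥1} be a decreasing sequence of positive reals converging to 0, and for each m let γ̂_m ∈ St be a maximizer of V²_{n,ε_m} over St (i.e., V²_{n,ε_m}(γ̂_m) ≥ V²_{n,ε_m}(γ) for all γ ∈ St). Then every limit point γ* of the sequence (γ̂_m) is a maximizer of V_n² over St: γ* ∈ St and V_n²(γ) ≤ V_n²(γ*) for all γ ∈ St. -/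
open Matrix

open Filter

lemma log_le_two_sqrt {x : ℝ} (hx : 0 ≤ x) : Real.log (1 + x) ≤ 2 * Real.sqrt x := by
  have h1 : (0:ℝ) < 1 + x := by linarith
  have hs : Real.log (Real.sqrt (1 + x)) ≤ Real.sqrt (1 + x) - 1 :=
    Real.log_le_sub_one_of_pos (Real.sqrt_pos.mpr h1)
  rw [Real.log_sqrt h1.le] at hs
  have h2 : Real.sqrt (1 + x) ≤ 1 + Real.sqrt x := by
    rw [show (1:ℝ) + Real.sqrt x = Real.sqrt ((1 + Real.sqrt x)^2) from
      (Real.sqrt_sq (by positivity)).symm]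
    apply Real.sqrt_le_sqrt
    nlinarith [Real.sqrt_nonneg x, Real.sq_sqrt hx]
  linarith

lemma pert_nonneg {ε a : ℝ} (hε : 0 < ε) (ha : 0 ≤ a) :
    0 ≤ ε * Real.log (1 + a / ε) :=
  mul_nonneg hε.le (Real.log_nonneg (by
    have := div_nonneg ha hε.le; linarith))

lemma pert_le {ε a : ℝ} (hε : 0 < ε) (ha : 0 ≤ a) :
    ε * Real.log (1 + a / ε) ≤ 2 * Real.sqrt ε * Real.sqrt a := by
  have h := log_le_two_sqrt (x := a/ε) (div_nonneg ha hε.le)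
  calc ε * Real.log (1 + a/ε) ≤ ε * (2 * Real.sqrt (a/ε)) :=
      mul_le_mul_of_nonneg_left h hε.le
    _ = 2 * Real.sqrt ε * Real.sqrt a := by
        rw [Real.sqrt_div ha]
        have hne : Real.sqrt ε ≠ 0 := ne_of_gt (Real.sqrt_pos.mpr hε)
        field_simp
        nlinarith [Real.mul_self_sqrt hε.le, Real.sqrt_nonneg a]

lemma tendsto_pert (ε a : ℕ → ℝ) (hε : ∀ m, 0 < ε m)
    (hε0 : Tendsto ε atTop (nhds 0)) (ha : ∀ m, 0 ≤ a m) (a0 : ℝ)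
    (ha0 : Tendsto a atTop (nhds a0)) :
    Tendsto (fun m => ε m * Real.log (1 + a m / ε m)) atTop (nhds 0) := by
  apply squeeze_zero (fun m => pert_nonneg (hε m) (ha m))
    (fun m => pert_le (hε m) (ha m))
  have h1 : Tendsto (fun m => Real.sqrt (ε m)) atTop (nhds 0) := by
    have := (Real.continuous_sqrt.tendsto 0).comp hε0
    simpa [Function.comp_def] using this
  have h2 : Tendsto (fun m => Real.sqrt (a m)) atTop (nhds (Real.sqrt a0)) :=
    (Real.continuous_sqrt.tendsto a0).comp ha0
  have := ((tendsto_const_nhds (x := (2:ℝ))).mul h1).mul h2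
  simpa using this

lemma akl_cont (n p d : ℕ) (Z : Fin n → Fin p → ℝ) (k l : Fin n) :
    Continuous (fun γ : Matrix (Fin p) (Fin d) ℝ => akl n p d Z γ k l) := by
  unfold akl _root_.enorm
  apply Real.continuous_sqrt.comp
  apply continuous_finset_sum
  intro i _
  apply Continuous.pow
  simp only [mulVec, dotProduct, transpose_apply]
  apply continuous_finset_sum
  intro j _
  exact (continuous_id.matrix_elem j i).mul continuous_const

lemma akl_nonneg (n p d : ℕ) (Z : Fin n → Fin p → ℝ)
    (γ : Matrix (Fin p) (Fin d) ℝ) (k l : Fin n) : 0 ≤ akl n p d Z γ k l :=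
  Real.sqrt_nonneg _

/-- If (ε_m) is a decreasing sequence of positive reals tending
to 0 and γ̂_m maximizes V²_{n,ε_m} over the Stiefel manifold, then every
limit point γ* of (γ̂_m) lies in the Stiefel manifold and maximizes V_n²
over it. -/
theorem stmt_16 (n p d : ℕ) (Z : Fin n → Fin p → ℝ) (B : Fin n → Fin n → ℝ)
    (eps : ℕ → ℝ) (hpos : ∀ m, 0 < eps m) (hdec : Antitone eps)
    (hlim : Filter.Tendsto eps Filter.atTop (nhds 0))
    (γhat : ℕ → Matrix (Fin p) (Fin d) ℝ)
    (hSt : ∀ m, (γhat m)ᵀ * γhat m = 1)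
    (hmax : ∀ m, ∀ γ : Matrix (Fin p) (Fin d) ℝ, γᵀ * γ = 1 →
      Vne n p d Z B (eps m) γ ≤ Vne n p d Z B (eps m) (γhat m))
    (γstar : Matrix (Fin p) (Fin d) ℝ)
    (φ : ℕ → ℕ) (hφ : StrictMono φ)
    (hconv : Filter.Tendsto (fun m => γhat (φ m)) Filter.atTop (nhds γstar)) :
    γstarᵀ * γstar = 1 ∧
    ∀ γ : Matrix (Fin p) (Fin d) ℝ, γᵀ * γ = 1 →
      Vn n p d Z B γ ≤ Vn n p d Z B γstar := by
  constructor
  · have hc : Continuous (fun γ : Matrix (Fin p) (Fin d) ℝ => γᵀ * γ) :=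
      (continuous_id.matrix_transpose).matrix_mul continuous_id
    have h1 : Tendsto (fun m => (γhat (φ m))ᵀ * γhat (φ m)) atTop
        (nhds (γstarᵀ * γstar)) := (hc.tendsto γstar).comp hconv
    have h2 : (fun m => (γhat (φ m))ᵀ * γhat (φ m))
        = fun _ => (1 : Matrix (Fin d) (Fin d) ℝ) := funext fun m => hSt (φ m)
    rw [h2] at h1
    exact (tendsto_nhds_unique h1 tendsto_const_nhds)
  · intro γ hγ
    set E : ℕ → ℝ := fun m => eps (φ m) with hE
    have hEpos : ∀ m, 0 < E m := fun m => hpos _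
    have hE0 : Tendsto E atTop (nhds 0) := hlim.comp hφ.tendsto_atTop
    have key : ∀ (g : ℕ → Matrix (Fin p) (Fin d) ℝ) (g0 : Matrix (Fin p) (Fin d) ℝ),
        Tendsto g atTop (nhds g0) →
        Tendsto (fun m => Vne n p d Z B (E m) (g m)) atTop (nhds (Vn n p d Z B g0)) := by
      intro g g0 hg
      unfold Vne Vn
      apply Tendsto.const_mul
      apply tendsto_finset_sum _ (fun k _ => ?_)
      apply tendsto_finset_sum _ (fun l _ => ?_)
      apply Tendsto.mul_const
      have ha : Tendsto (fun m => akl n p d Z (g m) k l) atTop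
          (nhds (akl n p d Z g0 k l)) := ((akl_cont n p d Z k l).tendsto g0).comp hg
      have hp := tendsto_pert E (fun m => akl n p d Z (g m) k l) hEpos hE0
        (fun m => akl_nonneg n p d Z (g m) k l) _ ha
      simpa using ha.sub hp
    exact le_of_tendsto_of_tendsto' (key (fun _ => γ) γ tendsto_const_nhds)
      (key (fun m => γhat (φ m)) γstar hconv) (fun m => hmax (φ m) γ hγ)
end

section
/- Let ε > 0, let M ∈ ℝ^{p×p}, let w_1,…,w_p ≥ 0, and denote by e_i the i-th standard basis vector of ℝ^p. For all γ, γ⁽ᵗ⁾ ∈ ℝ^{p×d}, the penalty minorization holds: −Σ_{i=1}^p w_i·[‖e_iᵀMγ‖₂ − ε·log(1 + ‖e_iᵀMγ‖₂/ε)] ≥ −Σ_{i=1}^p w_i·[‖e_iᵀMγ⁽ᵗ⁾‖₂ − ε·log(1 + ‖e_iᵀMγ⁽ᵗ⁾‖₂/ε)] − Σ_{i=1}^p w_i·(‖e_iᵀMγ‖₂² − ‖e_iᵀMγ⁽ᵗ⁾‖₂²)/(2·(‖e_iᵀMγ⁽ᵗ⁾‖₂ + ε)). -/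
open Matrix

/-- Euclidean norm of a vector in `ℝ^m`. -/
noncomputable def enorm' {m : ℕ} (v : Fin m → ℝ) : ℝ := Real.sqrt (∑ i, v i ^ 2)

private lemma key_deriv (ε c : ℝ) (hε : 0 < ε) (hc : 0 < c) (t : ℝ) (ht : 0 ≤ t) :
    HasDerivAt (fun s : ℝ => s - ε * Real.log (1 + s / ε) - s ^ 2 / (2 * c))
      (t * (c - ε - t) / ((ε + t) * c)) t := by
  have h1 : (0:ℝ) < 1 + t / ε := by positivity
  have hd : HasDerivAt (fun s : ℝ => 1 + s / ε) (1 / ε) t := by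
    simpa using ((hasDerivAt_id t).div_const ε).const_add 1
  have hlog : HasDerivAt (fun s : ℝ => Real.log (1 + s / ε)) ((1 + t / ε)⁻¹ * (1 / ε)) t := by
    have := (Real.hasDerivAt_log (ne_of_gt h1)).comp t hd
    exact this
  have hsq : HasDerivAt (fun s : ℝ => s ^ 2 / (2 * c)) (2 * t / (2 * c)) t := by
    simpa using (hasDerivAt_pow 2 t).div_const (2 * c)
  have : HasDerivAt (fun s : ℝ => s - ε * Real.log (1 + s / ε) - s ^ 2 / (2 * c)) _ t :=
    ((hasDerivAt_id t).sub (hlog.const_mul ε)).sub hsq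
  convert this using 1
  have hεt : ε + t ≠ 0 := by positivity
  have hε0 : ε ≠ 0 := hε.ne'
  have hc0 : c ≠ 0 := hc.ne'
  have h10 : 1 + t / ε ≠ 0 := h1.ne'
  field_simp
  ring

private lemma key (ε : ℝ) (hε : 0 < ε) (x y : ℝ) (hx : 0 ≤ x) (hy : 0 ≤ y) :
    x - ε * Real.log (1 + x / ε) ≤
      y - ε * Real.log (1 + y / ε) + (x ^ 2 - y ^ 2) / (2 * (y + ε)) := by
  set c : ℝ := y + ε with hcdef
  have hc : 0 < c := by positivity
  set g : ℝ → ℝ := fun s => s - ε * Real.log (1 + s / ε) - s ^ 2 / (2 * c) with hg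
  suffices h : g x ≤ g y by
    simp only [hg] at h
    have hdd : x ^ 2 / (2 * c) - y ^ 2 / (2 * c) = (x ^ 2 - y ^ 2) / (2 * c) := by ring
    linarith
  -- g has derivative t*(c-ε-t)/((ε+t)*c) = t*(y-t)/((ε+t)*c) at t ≥ 0
  have hder : ∀ t : ℝ, 0 ≤ t → HasDerivAt g (t * (y - t) / ((ε + t) * c)) t := by
    intro t ht
    have := key_deriv ε c hε hc t ht
    simpa [hg, hcdef, show c - ε = y by simp [hcdef]] using this
  rcases le_total x y with hxy | hxy
  · -- g monotone on [0, y]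
    have hmono : MonotoneOn g (Set.Icc 0 y) := by
      apply monotoneOn_of_deriv_nonneg (convex_Icc 0 y)
      · intro t ht
        exact (hder t ht.1).continuousAt.continuousWithinAt
      · intro t ht
        rw [interior_Icc] at ht
        exact (hder t ht.1.le).differentiableAt.differentiableWithinAt
      · intro t ht
        rw [interior_Icc] at ht
        rw [(hder t ht.1.le).deriv]
        have h1 : (0:ℝ) < (ε + t) * c := mul_pos (by linarith [ht.1]) hc
        exact div_nonneg (mul_nonneg ht.1.le (by linarith [ht.2])) h1.le
    exact hmono (Set.mem_Icc.mpr ⟨hx, hxy⟩) (Set.mem_Icc.mpr ⟨hy, le_rfl⟩) hxy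
  · -- g antitone on [y, x]
    have hanti : AntitoneOn g (Set.Icc y x) := by
      apply antitoneOn_of_deriv_nonpos (convex_Icc y x)
      · intro t ht
        exact (hder t (hy.trans ht.1)).continuousAt.continuousWithinAt
      · intro t ht
        rw [interior_Icc] at ht
        exact (hder t (hy.trans ht.1.le)).differentiableAt.differentiableWithinAt
      · intro t ht
        rw [interior_Icc] at ht
        rw [(hder t (hy.trans ht.1.le)).deriv]
        have h1 : (0:ℝ) < (ε + t) * c := mul_pos (by linarith [hy.trans ht.1.le]) hc
        apply div_nonpos_of_nonpos_of_nonneg _ h1.le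
        have : 0 ≤ t := hy.trans ht.1.le
        nlinarith [ht.1]
    exact hanti (Set.mem_Icc.mpr ⟨le_rfl, hxy⟩) (Set.mem_Icc.mpr ⟨hxy, le_rfl⟩) hxy

/-- For ε > 0, M ∈ ℝ^{p×p}, nonnegative weights w_i, and all
γ, γ⁽ᵗ⁾ ∈ ℝ^{p×d}, the penalty minorization holds, where `e_iᵀMγ` is the
i-th row of Mγ and ‖·‖₂ its Euclidean norm:
`−Σ_i w_i·[‖e_iᵀMγ‖ − ε·log(1 + ‖e_iᵀMγ‖/ε)]
  ≥ −Σ_i w_i·[‖e_iᵀMγ⁽ᵗ⁾‖ − ε·log(1 + ‖e_iᵀMγ⁽ᵗ⁾‖/ε)]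
    − Σ_i w_i·(‖e_iᵀMγ‖² − ‖e_iᵀMγ⁽ᵗ⁾‖²)/(2(‖e_iᵀMγ⁽ᵗ⁾‖ + ε))`. -/
theorem stmt_18 (p d : ℕ) (ε : ℝ) (hε : 0 < ε)
    (M : Matrix (Fin p) (Fin p) ℝ) (w : Fin p → ℝ) (hw : ∀ i, 0 ≤ w i)
    (γ γt : Matrix (Fin p) (Fin d) ℝ) :
    -∑ i, w i * (enorm' ((M * γ) i) - ε * Real.log (1 + enorm' ((M * γ) i) / ε))
      ≥ -∑ i, w i * (enorm' ((M * γt) i) - ε * Real.log (1 + enorm' ((M * γt) i) / ε))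
        - ∑ i, w i * (enorm' ((M * γ) i) ^ 2 - enorm' ((M * γt) i) ^ 2) /
            (2 * (enorm' ((M * γt) i) + ε)) := by
  have hmain : ∑ i, w i * (enorm' ((M * γ) i) - ε * Real.log (1 + enorm' ((M * γ) i) / ε))
      ≤ ∑ i, (w i * (enorm' ((M * γt) i) - ε * Real.log (1 + enorm' ((M * γt) i) / ε))
        + w i * (enorm' ((M * γ) i) ^ 2 - enorm' ((M * γt) i) ^ 2) /
            (2 * (enorm' ((M * γt) i) + ε))) := by
    apply Finset.sum_le_sum
    intro i _
    set x := enorm' ((M * γ) i) with hxdef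
    set y := enorm' ((M * γt) i) with hydef
    have hx : 0 ≤ x := Real.sqrt_nonneg _
    have hy : 0 ≤ y := Real.sqrt_nonneg _
    have hk := key ε hε x y hx hy
    have hwd : w i * ((x ^ 2 - y ^ 2) / (2 * (y + ε)))
        = w i * (x ^ 2 - y ^ 2) / (2 * (y + ε)) := by ring
    nlinarith [mul_le_mul_of_nonneg_left hk (hw i)]
  rw [Finset.sum_add_distrib] at hmain
  linarith [hmain]
end
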